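/- For 0 < α ≤ 1, β > 0, and real c with |c| < s^α (s > 0), the Laplace transform of t ↦ t^{β-1} E_{α,β}(c t^α) evaluated at s equals s^{-β} (1 - c s^{-α})^{-1}. -/

import Mathlib

open MeasureTheory

/-- Two-parameter Mittag-Leffler function (real argument). -/
noncomputable def mittagLeffler2 (α β : ℝ) (z : ℝ) : ℝ :=
  ∑' k : ℕ, z ^ k / Real.Gamma (k * α + β)

open Real Set in
/-- Laplace transform of `t ↦ t^(β-1) E_{α,β}(c t^α)`:
for `0 < α ≤ 1`, `β > 0`, `s > 0` with `|c| < s^α`,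
`∫₀^∞ e^(-s t) t^(β-1) E_{α,β}(c t^α) dt = s^(-β) (1 - c s^(-α))⁻¹`. -/
theorem laplace_transform_mittagLeffler (α β c s : ℝ) (hα0 : 0 < α) (hα1 : α ≤ 1)
    (hβ : 0 < β) (hs : 0 < s) (hc : |c| < s ^ α) :
    (∫ t in Set.Ioi (0 : ℝ),
        Real.exp (-s * t) * (t ^ (β - 1) * mittagLeffler2 α β (c * t ^ α)))
      = s ^ (-β) * (1 - c * s ^ (-α))⁻¹ := by
  set g : ℕ → ℝ → ℝ := fun k t =>
    (c ^ k / Real.Gamma (k * α + β)) * (t ^ (k * α + β - 1) * Real.exp (-(s * t))) with hg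
  have hp : ∀ k : ℕ, (0:ℝ) < k * α + β := fun k => by positivity
  have hΓ : ∀ k : ℕ, (0:ℝ) < Real.Gamma (k * α + β) := fun k => Real.Gamma_pos_of_pos (hp k)
  have hpow : ∀ k : ℕ, (1/s) ^ ((k:ℝ)*α+β) = (s^(-α))^k * s^(-β) := by
    intro k
    rw [one_div, ← Real.rpow_neg_one s, ← Real.rpow_natCast (s ^ (-α:ℝ)),
      ← Real.rpow_mul hs.le, ← Real.rpow_mul hs.le, ← Real.rpow_add hs]
    congr 1
    ring
  -- integrability of each term
  have hint : ∀ k : ℕ, IntegrableOn (g k) (Ioi 0) := by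
    intro k
    have h1 : IntegrableOn (fun t : ℝ => t ^ (k * α + β - 1) * Real.exp (-s * t ^ (1:ℝ)))
        (Ioi 0) := integrableOn_rpow_mul_exp_neg_mul_rpow (by linarith [hp k]) one_pos hs
    have h2 : IntegrableOn (fun t : ℝ => t ^ (k * α + β - 1) * Real.exp (-(s * t))) (Ioi 0) := by
      refine h1.congr_fun (fun t ht => ?_) measurableSet_Ioi
      beta_reduce
      rw [Real.rpow_one, neg_mul]
    exact h2.const_mul _
  -- value of each integral
  have hval : ∀ k : ℕ, ∫ t in Ioi 0, g k t = (c * s ^ (-α)) ^ k * s ^ (-β) := by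
    intro k
    rw [hg]
    simp only
    rw [MeasureTheory.integral_const_mul, Real.integral_rpow_mul_exp_neg_mul_Ioi (hp k) hs]
    rw [hpow k, mul_pow]
    field_simp
  -- norm integrals
  have hnorm : ∀ k : ℕ, ∫ t in Ioi 0, ‖g k t‖ = (|c| * s ^ (-α)) ^ k * s ^ (-β) := by
    intro k
    have : ∫ t in Ioi 0, ‖g k t‖
        = ∫ t in Ioi 0, (|c| ^ k / Real.Gamma (k * α + β)) *
          (t ^ (k * α + β - 1) * Real.exp (-(s * t))) := by
      refine setIntegral_congr_fun measurableSet_Ioi (fun t ht => ?_)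
      rw [hg]
      simp only [norm_mul, Real.norm_eq_abs, abs_div, abs_pow,
        abs_of_pos (hΓ k), abs_of_pos (Real.rpow_pos_of_pos ht _),
        abs_of_pos (Real.exp_pos _)]
    rw [this, MeasureTheory.integral_const_mul, Real.integral_rpow_mul_exp_neg_mul_Ioi (hp k) hs]
    rw [hpow k, mul_pow]
    field_simp
  have hr : |c| * s ^ (-α) < 1 := by
    have h1 : (0:ℝ) < s ^ α := Real.rpow_pos_of_pos hs α
    rw [Real.rpow_neg hs.le]
    rw [mul_inv_lt_iff₀ h1, one_mul]
    exact hc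
  have hrabs : |c * s ^ (-α)| < 1 := by
    rwa [abs_mul, abs_of_pos (Real.rpow_pos_of_pos hs _)]
  have hsum : Summable fun k : ℕ => ∫ t in Ioi 0, ‖g k t‖ := by
    simp_rw [hnorm]
    exact (summable_geometric_of_abs_lt_one
      (by rwa [abs_of_nonneg (by positivity : (0:ℝ) ≤ |c| * s ^ (-α))])).mul_right _
  have hswap := MeasureTheory.integral_tsum_of_summable_integral_norm hint hsum
  -- pointwise sum identity
  have hpt : ∀ t ∈ Ioi (0:ℝ), (∑' k, g k t)
      = Real.exp (-s * t) * (t ^ (β - 1) * mittagLeffler2 α β (c * t ^ α)) := by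
    intro t ht
    rw [mittagLeffler2, ← tsum_mul_left, ← tsum_mul_left]
    refine tsum_congr fun k => ?_
    rw [hg]
    simp only
    have htpow : (c * t ^ α) ^ k = c ^ k * t ^ (α * k) := by
      rw [mul_pow, ← Real.rpow_natCast (t ^ α), ← Real.rpow_mul ht.le]
    rw [htpow]
    have : t ^ (k * α + β - 1) = t ^ (β - 1) * t ^ (α * k) := by
      rw [← Real.rpow_add ht]
      ring_nf
    rw [this, neg_mul]
    field_simp
  have : ∫ t in Ioi 0, (∑' k, g k t)
      = ∫ t in Ioi 0, Real.exp (-s * t) * (t ^ (β - 1) * mittagLeffler2 α β (c * t ^ α)) :=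
    setIntegral_congr_fun measurableSet_Ioi hpt
  rw [← this, ← hswap]
  simp_rw [hval]
  rw [tsum_mul_right, tsum_geometric_of_abs_lt_one hrabs, mul_comm]
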